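/- For every ε ∈ [0, 1), there exists an odd integer n ≥ 3 such that (n - 1 + ε)/2 < n·cos(π/n)/(1 + cos(π/n)). -/

import Mathlib

open Real

theorem stmt_4 (ε : ℝ) (hε : ε ∈ Set.Ico (0 : ℝ) 1) :
    ∃ n : ℕ, Odd n ∧ 3 ≤ n ∧
      ((n : ℝ) - 1 + ε) / 2 < n * cos (π / n) / (1 + cos (π / n)) := by
  obtain ⟨hε0, hε1⟩ := hε
  set δ : ℝ := 1 - ε with hδ
  have hδ0 : 0 < δ := by simp [hδ]; linarith
  refine ⟨2 * ⌈5 / δ⌉₊ + 3, ⟨⌈5 / δ⌉₊ + 1, by ring⟩, by omega, ?_⟩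
  set n : ℕ := 2 * ⌈5 / δ⌉₊ + 3 with hn
  have hn3 : (3 : ℝ) ≤ (n : ℝ) := by
    have : (3 : ℕ) ≤ n := by omega
    exact_mod_cast this
  have hnpos : (0 : ℝ) < n := by linarith
  have hnd : 5 / δ ≤ (n : ℝ) := by
    calc 5 / δ ≤ (⌈5 / δ⌉₊ : ℝ) := Nat.le_ceil _
    _ ≤ (n : ℝ) := by
        have : (⌈5 / δ⌉₊ : ℕ) ≤ n := by omega
        exact_mod_cast this
  have hnd5 : 5 ≤ (n : ℝ) * δ := by
    rw [div_le_iff₀ hδ0] at hnd; linarith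
  set c : ℝ := cos (π / n) with hc
  have hpi : π < 3.15 := pi_lt_d2
  have hpi0 : 0 < π := pi_pos
  have hc1 : c ≤ 1 := cos_le_one _
  have hc0 : 0 ≤ c := by
    apply Real.cos_nonneg_of_mem_Icc
    constructor
    · have h0 : 0 ≤ π / n := by positivity
      linarith [pi_pos]
    · rw [div_le_div_iff₀ hnpos (by norm_num : (0:ℝ) < 2)]; nlinarith
  have hcb : 1 - (π / n) ^ 2 / 2 ≤ c := one_sub_sq_div_two_le_cos
  have hkey : (n : ℝ) ^ 2 * (1 - c) ≤ π ^ 2 / 2 := by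
    have : (π / n) ^ 2 = π ^ 2 / n ^ 2 := by ring
    rw [this] at hcb
    have hn2 : (0 : ℝ) < (n : ℝ) ^ 2 := by positivity
    have h2 : 1 - c ≤ π ^ 2 / (n : ℝ) ^ 2 / 2 := by linarith
    have h3 := mul_le_mul_of_nonneg_left h2 hn2.le
    have heq : (n : ℝ) ^ 2 * (π ^ 2 / (n : ℝ) ^ 2 / 2) = π ^ 2 / 2 := by
      field_simp
    rw [heq] at h3
    linarith
  have h1c : (0 : ℝ) < 1 + c := by linarith
  rw [div_lt_div_iff₀ (by norm_num) h1c]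
  -- goal: (n - 1 + ε) * (1 + c) < n * c * 2
  have hpl : π ^ 2 < 10 := by nlinarith
  -- n(1-c) < δ(1+c)
  have hmain : (n : ℝ) * (1 - c) < δ * (1 + c) := by
    nlinarith [mul_pos hnpos hδ0, mul_nonneg (mul_nonneg hnpos.le hδ0.le) hc0]
  have : ε = 1 - δ := by simp [hδ]
  rw [this]; nlinarith
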